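/- Fix p with 1 ≤ p ≤ 2. There exists a constant C > 0, depending only on p, such that for every integer k ≥ 1 and all independent, mean zero, real-valued random variables X̂_0,…,X̂_{k−1} on a probability space, each with E[|X̂_i|^p] < ∞, one has E[|Σ_{i=0}^{k−1} X̂_i|^p] ≤ C Σ_{i=0}^{k−1} E[|X̂_i|^p]. -/

import Mathlib

open MeasureTheory ProbabilityTheory

lemma VBE.rpow_add_le {q : ℝ} (hq0 : 0 ≤ q) (hq1 : q ≤ 1) {a b : ℝ} (ha : 0 ≤ a) (hb : 0 ≤ b) :
    (a + b) ^ q ≤ a ^ q + b ^ q := by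
  lift a to NNReal using ha
  lift b to NNReal using hb
  have h := NNReal.rpow_add_le_add_rpow a b hq0 hq1
  exact_mod_cast h

lemma VBE.abs_rpow_sub_rpow_le {q : ℝ} (hq0 : 0 ≤ q) (hq1 : q ≤ 1) {x y : ℝ}
    (hx : 0 ≤ x) (hy : 0 ≤ y) : |x ^ q - y ^ q| ≤ |x - y| ^ q := by
  wlog h : y ≤ x generalizing x y
  · rw [abs_sub_comm, abs_sub_comm x y]; exact this hy hx (le_of_not_ge h)
  have h1 : x ^ q ≤ y ^ q + (x - y) ^ q := by
    calc x ^ q = (y + (x - y)) ^ q := by ring_nf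
    _ ≤ y ^ q + (x - y) ^ q := VBE.rpow_add_le hq0 hq1 hy (by linarith)
  have h2 : y ^ q ≤ x ^ q := Real.rpow_le_rpow hy h hq0
  have h3 : (0:ℝ) ≤ x - y := by linarith
  rw [abs_of_nonneg (by linarith), abs_of_nonneg h3]
  linarith

lemma VBE.key_pos {p : ℝ} (hp1 : 1 ≤ p) (hp2 : p ≤ 2) {a b : ℝ} (ha : 0 < a) (hba : |b| < a) :
    (a + b) ^ p - a ^ p - p * a ^ (p - 1) * b ≤ 2 * |b| ^ p := by
  have hp0 : (0:ℝ) < p := lt_of_lt_of_le zero_lt_one hp1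
  rcases eq_or_ne b 0 with hb | hb
  · simp [hb, Real.zero_rpow hp0.ne']
  have hbpos : 0 < |b| := abs_pos.mpr hb
  set g : ℝ → ℝ := fun t => (a + t * b) ^ p with hg
  have hpos : ∀ t ∈ Set.Icc (0:ℝ) 1, 0 < a + t * b := by
    intro t ht
    have h1 : |t * b| ≤ |b| := by
      rw [abs_mul]
      calc |t| * |b| ≤ 1 * |b| := by
            apply mul_le_mul_of_nonneg_right _ (abs_nonneg b)
            rw [abs_le]; exact ⟨by linarith [ht.1], ht.2⟩
        _ = |b| := one_mul _
    have := neg_abs_le (t * b)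
    linarith
  have hderiv : ∀ t ∈ Set.Ioo (0:ℝ) 1, HasDerivAt g (p * (a + t * b) ^ (p - 1) * b) t := by
    intro t ht
    have h1 : HasDerivAt (fun t : ℝ => a + t * b) b t := by
      simpa using ((hasDerivAt_id t).mul_const b).const_add a
    have h2 := h1.rpow_const (p := p) (Or.inl (ne_of_gt (hpos t (Set.mem_Icc_of_Ioo ht))))
    convert h2 using 1
    ring
  have hcont : ContinuousOn g (Set.Icc (0:ℝ) 1) := by
    apply ContinuousOn.rpow_const
    · fun_prop
    · intro t ht
      exact Or.inl (ne_of_gt (hpos t ht))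
  obtain ⟨ξ, hξ, heq⟩ := exists_hasDerivAt_eq_slope g _ zero_lt_one hcont hderiv
  have hg1 : g 1 = (a + b) ^ p := by simp [hg]
  have hg0 : g 0 = a ^ p := by simp [hg]
  rw [hg1, hg0] at heq
  have heq2 : (a + b) ^ p - a ^ p = p * (a + ξ * b) ^ (p - 1) * b := by
    rw [heq]; ring
  have hξpos := hpos ξ (Set.mem_Icc_of_Ioo hξ)
  have hdiff : |(a + ξ * b) ^ (p - 1) - a ^ (p - 1)| ≤ |b| ^ (p - 1) := by
    have h1 := VBE.abs_rpow_sub_rpow_le (q := p - 1) (by linarith) (by linarith)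
      hξpos.le ha.le
    have h2 : |a + ξ * b - a| = |ξ| * |b| := by rw [← abs_mul]; ring_nf
    have h3 : |ξ| * |b| ≤ |b| := by
      calc |ξ| * |b| ≤ 1 * |b| := by
            apply mul_le_mul_of_nonneg_right _ (abs_nonneg b)
            rw [abs_le]; constructor <;> [linarith [hξ.1]; linarith [hξ.2]]
        _ = |b| := one_mul _
    calc |(a + ξ * b) ^ (p - 1) - a ^ (p - 1)| ≤ |a + ξ * b - a| ^ (p - 1) := h1
      _ = (|ξ| * |b|) ^ (p - 1) := by rw [h2]
      _ ≤ |b| ^ (p - 1) := Real.rpow_le_rpow (by positivity) h3 (by linarith)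
  have key : (a + b) ^ p - a ^ p - p * a ^ (p - 1) * b
      = p * b * ((a + ξ * b) ^ (p - 1) - a ^ (p - 1)) := by
    rw [heq2]; ring
  rw [key]
  have habs : |p * b * ((a + ξ * b) ^ (p - 1) - a ^ (p - 1))| ≤ 2 * |b| ^ p := by
    rw [abs_mul, abs_mul, abs_of_pos hp0]
    have hfin : |b| ^ (p - 1) * |b| = |b| ^ p := by
      have h := Real.rpow_add hbpos (p - 1) 1
      rw [Real.rpow_one] at h
      rw [← h]; norm_num
    calc p * |b| * |(a + ξ * b) ^ (p - 1) - a ^ (p - 1)|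
        ≤ p * |b| * (|b| ^ (p - 1)) := by
          apply mul_le_mul_of_nonneg_left hdiff (by positivity)
      _ = p * (|b| ^ (p - 1) * |b|) := by ring
      _ = p * |b| ^ p := by rw [hfin]
      _ ≤ 2 * |b| ^ p := by
          apply mul_le_mul_of_nonneg_right hp2 (by positivity)
  calc p * b * ((a + ξ * b) ^ (p - 1) - a ^ (p - 1))
      ≤ |p * b * ((a + ξ * b) ^ (p - 1) - a ^ (p - 1))| := le_abs_self _
    _ ≤ 2 * |b| ^ p := habs

lemma VBE.abs_sign_le_one (x : ℝ) : |Real.sign x| ≤ 1 := by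
  rcases lt_trichotomy x 0 with h | h | h
  · rw [Real.sign_of_neg h]; norm_num
  · rw [h, Real.sign_zero]; norm_num
  · rw [Real.sign_of_pos h]; norm_num

lemma VBE.key {p : ℝ} (hp1 : 1 ≤ p) (hp2 : p ≤ 2) (a b : ℝ) :
    |a + b| ^ p ≤ |a| ^ p + p * Real.sign a * |a| ^ (p - 1) * b + 6 * |b| ^ p := by
  have hp0 : (0:ℝ) < p := lt_of_lt_of_le zero_lt_one hp1
  rcases eq_or_ne b 0 with hb | hb
  · simp [hb, Real.zero_rpow hp0.ne']
  have hbpos : 0 < |b| := abs_pos.mpr hb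
  have hfin : |b| ^ (p - 1) * |b| = |b| ^ p := by
    have h := Real.rpow_add hbpos (p - 1) 1
    rw [Real.rpow_one] at h
    rw [← h]; norm_num
  have h4 : (2:ℝ) ^ p ≤ 4 := by
    have h := Real.rpow_le_rpow_of_exponent_le (x := 2) one_le_two hp2
    have h2 : (2:ℝ) ^ (2:ℝ) = 4 := by
      rw [show (2:ℝ) = ((2:ℕ):ℝ) from by norm_num]
      rw [Real.rpow_natCast]; norm_num
    rw [h2] at h
    exact h
  by_cases hab : |a| ≤ |b|
  · -- small a case
    have hL : |a + b| ^ p ≤ 4 * |b| ^ p := by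
      calc |a + b| ^ p ≤ (2 * |b|) ^ p := by
            apply Real.rpow_le_rpow (abs_nonneg _) _ hp0.le
            calc |a + b| ≤ |a| + |b| := abs_add_le a b
              _ ≤ 2 * |b| := by linarith
        _ = 2 ^ p * |b| ^ p := Real.mul_rpow (by norm_num) (abs_nonneg _)
        _ ≤ 4 * |b| ^ p := by
            apply mul_le_mul_of_nonneg_right h4 (by positivity)
    have hT : |p * Real.sign a * |a| ^ (p - 1) * b| ≤ 2 * |b| ^ p := by
      rw [abs_mul, abs_mul, abs_mul, abs_of_pos hp0,
        abs_of_nonneg (Real.rpow_nonneg (abs_nonneg a) _)]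
      have h1 : |a| ^ (p - 1) ≤ |b| ^ (p - 1) :=
        Real.rpow_le_rpow (abs_nonneg _) hab (by linarith)
      have hs : p * |Real.sign a| ≤ 2 := by
        have h2 := VBE.abs_sign_le_one a
        nlinarith [abs_nonneg (Real.sign a)]
      calc p * |Real.sign a| * |a| ^ (p - 1) * |b|
          ≤ 2 * |a| ^ (p - 1) * |b| := by
            apply mul_le_mul_of_nonneg_right
              (mul_le_mul_of_nonneg_right hs (by positivity)) (abs_nonneg b)
        _ ≤ 2 * |b| ^ (p - 1) * |b| := by
            apply mul_le_mul_of_nonneg_right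
              (mul_le_mul_of_nonneg_left h1 (by norm_num)) (abs_nonneg b)
        _ = 2 * |b| ^ p := by rw [mul_assoc, hfin]
    have hA : 0 ≤ |a| ^ p := by positivity
    have := neg_abs_le (p * Real.sign a * |a| ^ (p - 1) * b)
    linarith
  · push_neg at hab
    have hane : a ≠ 0 := by
      intro h; rw [h, abs_zero] at hab; exact absurd hab (not_lt.mpr (abs_nonneg b))
    rcases lt_or_gt_of_ne hane with haneg | hapos
    · -- a < 0 : apply key_pos to (-a, -b)
      have h1 : (0:ℝ) < -a := by linarith
      have h2 : |-b| < -a := by rwa [abs_neg, ← abs_of_neg haneg]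
      have h3 := VBE.key_pos hp1 hp2 h1 h2
      have habs : |a + b| = -a + -b := by
        rw [show a + b = -(-a + -b) by ring, abs_neg]
        apply abs_of_pos
        have hx : |b| < -a := by rwa [abs_of_neg haneg] at hab
        have hy := le_abs_self b
        linarith
      have hsa : Real.sign a = -1 := Real.sign_of_neg haneg
      have haa : |a| = -a := abs_of_neg haneg
      have hbb : |-b| = |b| := abs_neg b
      rw [habs, hsa, haa]
      rw [hbb] at h3
      ring_nf at h3 ⊢
      linarith [Real.rpow_nonneg (abs_nonneg b) p]
    · -- a > 0
      have h2 : |b| < a := by rwa [abs_of_pos hapos] at hab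
      have h3 := VBE.key_pos hp1 hp2 hapos h2
      have habs : |a + b| = a + b := by
        apply abs_of_pos
        have := neg_abs_le b
        linarith
      have hsa : Real.sign a = 1 := Real.sign_of_pos hapos
      have haa : |a| = a := abs_of_pos hapos
      rw [habs, hsa, haa]
      ring_nf at h3 ⊢
      linarith [Real.rpow_nonneg (abs_nonneg b) p]

lemma VBE.measurable_sign : Measurable Real.sign := by
  unfold Real.sign
  refine Measurable.ite (measurableSet_lt measurable_id measurable_const) measurable_const ?_
  exact Measurable.ite (measurableSet_lt measurable_const measurable_id)
    measurable_const measurable_const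

lemma VBE.step {p : ℝ} (hp1 : 1 ≤ p) (hp2 : p ≤ 2) {Ω : Type} [MeasurableSpace Ω]
    {P : Measure Ω} [IsProbabilityMeasure P] {S X : Ω → ℝ}
    (hSm : Measurable S) (hXm : Measurable X)
    (hind : IndepFun S X P) (hSp : MemLp S (ENNReal.ofReal p) P)
    (hXp : MemLp X (ENNReal.ofReal p) P) (hXmean : ∫ ω, X ω ∂P = 0) :
    ∫ ω, |S ω + X ω| ^ p ∂P ≤ (∫ ω, |S ω| ^ p ∂P) + 6 * ∫ ω, |X ω| ^ p ∂P := by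
  have hp0 : (0:ℝ) < p := lt_of_lt_of_le zero_lt_one hp1
  have hpne : ENNReal.ofReal p ≠ 0 := by
    simp [ENNReal.ofReal_eq_zero]; linarith
  have hptop : ENNReal.ofReal p ≠ ⊤ := ENNReal.ofReal_ne_top
  have htor : (ENNReal.ofReal p).toReal = p := ENNReal.toReal_ofReal hp0.le
  -- integrability of |f|^p for MemLp f
  have intabs : ∀ {f : Ω → ℝ}, MemLp f (ENNReal.ofReal p) P →
      Integrable (fun ω => |f ω| ^ p) P := by
    intro f hf
    have h := hf.integrable_norm_rpow hpne hptop
    simpa [htor, Real.norm_eq_abs] using h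
  have intS := intabs hSp
  have intX := intabs hXp
  have intSX : Integrable (fun ω => |S ω + X ω| ^ p) P := by
    have h := intabs (hSp.add hXp)
    simpa using h
  -- X is integrable
  have hX1 : Integrable X P := by
    rw [← memLp_one_iff_integrable]
    exact hXp.mono_exponent (by simpa using ENNReal.ofReal_le_ofReal hp1)
  -- the auxiliary function h
  set h : ℝ → ℝ := fun x => p * Real.sign x * |x| ^ (p - 1) with hh
  have hhm : Measurable h := by
    apply Measurable.mul
    · exact measurable_const.mul VBE.measurable_sign
    · exact ((Real.continuous_rpow_const (by linarith : (0:ℝ) ≤ p - 1)).measurable).comp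
        continuous_abs.measurable
  have hbound : ∀ x : ℝ, ‖h x‖ ≤ p * (1 + |x| ^ p) := by
    intro x
    rw [hh]
    simp only [Real.norm_eq_abs]
    rw [abs_mul, abs_mul, abs_of_pos hp0, abs_of_nonneg (Real.rpow_nonneg (abs_nonneg x) _)]
    have h1 : |x| ^ (p - 1) ≤ 1 + |x| ^ p := by
      by_cases hx : |x| ≤ 1
      · have := Real.rpow_le_one (abs_nonneg x) hx (by linarith : (0:ℝ) ≤ p - 1)
        have h0 : (0:ℝ) ≤ |x| ^ p := Real.rpow_nonneg (abs_nonneg x) p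
        linarith
      · push_neg at hx
        have := Real.rpow_le_rpow_of_exponent_le hx.le (by linarith : p - 1 ≤ p)
        linarith
    have hs := VBE.abs_sign_le_one x
    have h0 : (0:ℝ) ≤ |x| ^ (p - 1) := Real.rpow_nonneg (abs_nonneg x) _
    calc p * |Real.sign x| * |x| ^ (p - 1) ≤ p * 1 * |x| ^ (p - 1) := by
          apply mul_le_mul_of_nonneg_right
            (mul_le_mul_of_nonneg_left hs hp0.le) h0
      _ = p * (|x| ^ (p - 1)) := by ring
      _ ≤ p * (1 + |x| ^ p) := by
          apply mul_le_mul_of_nonneg_left h1 hp0.le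
  have inthS : Integrable (fun ω => h (S ω)) P := by
    apply Integrable.mono' (((integrable_const (1:ℝ)).add intS).const_mul p)
      ((hhm.comp hSm).aestronglyMeasurable)
    filter_upwards with ω
    simpa using hbound (S ω)
  have hindh : IndepFun (fun ω => h (S ω)) X P := hind.comp hhm measurable_id
  have intmul : Integrable (fun ω => h (S ω) * X ω) P :=
    hindh.integrable_mul inthS hX1
  have hmulint : ∫ ω, h (S ω) * X ω ∂P = 0 := by
    have h2 := hindh.integral_fun_mul_eq_mul_integral inthS.aestronglyMeasurable hX1.aestronglyMeasurable
    have h3 : ∫ ω, h (S ω) * X ω ∂P = (∫ ω, h (S ω) ∂P) * ∫ ω, X ω ∂P := h2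
    rw [h3, hXmean, mul_zero]
  have hpt : ∀ ω, |S ω + X ω| ^ p ≤ |S ω| ^ p + h (S ω) * X ω + 6 * |X ω| ^ p := by
    intro ω
    have := VBE.key hp1 hp2 (S ω) (X ω)
    simp only [hh]
    linarith
  calc ∫ ω, |S ω + X ω| ^ p ∂P
      ≤ ∫ ω, (|S ω| ^ p + h (S ω) * X ω + 6 * |X ω| ^ p) ∂P := by
        apply integral_mono intSX ((intS.add intmul).add (intX.const_mul 6)) hpt
    _ = (∫ ω, |S ω| ^ p ∂P) + (∫ ω, h (S ω) * X ω ∂P) + 6 * ∫ ω, |X ω| ^ p ∂P := by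
        have i1 : Integrable (fun ω => |S ω| ^ p + h (S ω) * X ω) P := intS.add intmul
        have i2 : Integrable (fun ω => 6 * |X ω| ^ p) P := intX.const_mul 6
        rw [integral_add i1 i2, integral_add intS intmul, integral_const_mul]
    _ = (∫ ω, |S ω| ^ p ∂P) + 6 * ∫ ω, |X ω| ^ p ∂P := by
        rw [hmulint]; ring

/-- **von Bahr–Esseen inequality.** For `1 ≤ p ≤ 2` there is `C > 0`, depending only on `p`,
such that for all `k ≥ 1` and all independent, mean zero, real random variables
`X̂_0, …, X̂_{k-1}` with `E[|X̂_i|^p] < ∞`: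
`E[|∑ X̂_i|^p] ≤ C ∑ E[|X̂_i|^p]`. -/
theorem stmt5 (p : ℝ) (hp1 : 1 ≤ p) (hp2 : p ≤ 2) :
    ∃ C : ℝ, 0 < C ∧
      ∀ (Ω : Type) (_ : MeasurableSpace Ω) (P : Measure Ω), IsProbabilityMeasure P →
      ∀ (k : ℕ), 1 ≤ k →
      ∀ (X : ℕ → Ω → ℝ),
        iIndepFun (fun i : Fin k => X i) P →
        (∀ i, i < k → Measurable (X i)) →
        (∀ i, i < k → ∫ ω, X i ω ∂P = 0) →
        (∀ i, i < k → MemLp (X i) (ENNReal.ofReal p) P) →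
        (∫ ω, |∑ i ∈ Finset.range k, X i ω| ^ p ∂P)
          ≤ C * ∑ i ∈ Finset.range k, ∫ ω, |X i ω| ^ p ∂P := by
  have hp0 : (0:ℝ) < p := lt_of_lt_of_le zero_lt_one hp1
  refine ⟨6, by norm_num, ?_⟩
  intro Ω mΩ P hP k _hk X hindep hmeas hmean hmem
  haveI := hP
  have claim : ∀ n, n ≤ k → (∫ ω, |∑ i ∈ Finset.range n, X i ω| ^ p ∂P)
      ≤ 6 * ∑ i ∈ Finset.range n, ∫ ω, |X i ω| ^ p ∂P := by
    intro n
    induction n with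
    | zero =>
      intro _
      simp [Real.zero_rpow hp0.ne']
    | succ n ih =>
      intro hnk
      have hn : n < k := hnk
      have hlt : ∀ m ∈ Finset.range n, m < k := fun m hm =>
        lt_trans (Finset.mem_range.mp hm) hn
      have hSm : Measurable (fun ω => ∑ i ∈ Finset.range n, X i ω) :=
        Finset.measurable_sum _ (fun i hi => hmeas i (hlt i hi))
      have hSp : MemLp (fun ω => ∑ i ∈ Finset.range n, X i ω) (ENNReal.ofReal p) P :=
        memLp_finset_sum _ (fun i hi => hmem i (hlt i hi))
      -- independence of partial sum and X n
      have hni : (⟨n, hn⟩ : Fin k) ∉ (Finset.range n).attachFin hlt := by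
        simp [Finset.mem_attachFin]
      have hind0 := hindep.indepFun_finsetSum_of_notMem
        (fun i : Fin k => hmeas i i.isLt) hni
      have hsum_eq : (∑ j ∈ (Finset.range n).attachFin hlt, X (j : ℕ))
          = fun ω => ∑ i ∈ Finset.range n, X i ω := by
        funext ω
        rw [Finset.sum_apply]
        refine Finset.sum_bij' (fun (a : Fin k) (_ : a ∈ (Finset.range n).attachFin hlt) => (a : ℕ))
          (fun m hm => (⟨m, hlt m hm⟩ : Fin k)) ?_ ?_ ?_ ?_ ?_
        · intro a ha
          rwa [Finset.mem_attachFin] at ha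
        · intro a ha
          rw [Finset.mem_attachFin]
          exact ha
        · intro a ha
          rfl
        · intro a ha
          rfl
        · intro a ha
          rfl
      have hind1 : IndepFun (fun ω => ∑ i ∈ Finset.range n, X i ω) (X n) P := by
        rwa [hsum_eq] at hind0
      have hs := VBE.step hp1 hp2 hSm (hmeas n hn) hind1 hSp (hmem n hn) (hmean n hn)
      have ih' := ih hn.le
      calc ∫ ω, |∑ i ∈ Finset.range (n+1), X i ω| ^ p ∂P
          = ∫ ω, |(∑ i ∈ Finset.range n, X i ω) + X n ω| ^ p ∂P := by
            simp_rw [Finset.sum_range_succ]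
        _ ≤ (∫ ω, |∑ i ∈ Finset.range n, X i ω| ^ p ∂P) + 6 * ∫ ω, |X n ω| ^ p ∂P := hs
        _ ≤ 6 * (∑ i ∈ Finset.range n, ∫ ω, |X i ω| ^ p ∂P) + 6 * ∫ ω, |X n ω| ^ p ∂P := by
            linarith
        _ = 6 * ∑ i ∈ Finset.range (n+1), ∫ ω, |X i ω| ^ p ∂P := by
            rw [Finset.sum_range_succ]; ring
  exact claim k le_rfl
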